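/- For every integer a > 1, there exists an F₂-linear map h : (ZMod 2)^(2^a − 1 − a) → (ZMod 2)^a such that the graph Γ = { (x, h(x)) : x ∈ (ZMod 2)^(2^a − 1 − a) } is a dominating set of the hypercube Q_{2^a − 1} of cardinality 2^(2^a − 1 − a), which is the minimal domination number γ_{2^a − 1}. -/

import Mathlib

/-- A finite subset of the hypercube `Q_n = (ZMod 2)^n` is dominating if every point of the
hypercube is at Hamming distance at most 1 from some element of the subset. -/
def IsDominating {n : ℕ} (Δ : Finset (Fin n → ZMod 2)) : Prop :=
  ∀ y : Fin n → ZMod 2, ∃ x ∈ Δ, hammingDist x y ≤ 1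

/-- The minimal domination number `γ_n` of the `n`-dimensional hypercube. -/
noncomputable def gamma (n : ℕ) : ℕ :=
  sInf {k | ∃ Δ : Finset (Fin n → ZMod 2), IsDominating Δ ∧ Δ.card = k}

open Finset

lemma zmod2_eq_one : ∀ {x : ZMod 2}, x ≠ 0 → x = 1 := by decide

lemma norm_single_one {n : ℕ} (i : Fin n) :
    hammingNorm (Pi.single i 1 : Fin n → ZMod 2) = 1 := by
  unfold hammingNorm
  have : ({j | (Pi.single i 1 : Fin n → ZMod 2) j ≠ 0} : Finset (Fin n)) = {i} := by
    ext j
    simp only [mem_filter, mem_univ, true_and, mem_singleton, Pi.single_apply]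
    constructor
    · intro hj; by_contra hc; simp [hc] at hj
    · rintro rfl; simp
  rw [this, card_singleton]

lemma norm_le_one_iff {n : ℕ} (s : Fin n → ZMod 2) (h : hammingNorm s ≤ 1) :
    s = 0 ∨ ∃ j, s = (Pi.single j 1 : Fin n → ZMod 2) := by
  rcases Nat.le_one_iff_eq_zero_or_eq_one.mp h with h0 | h1
  · exact Or.inl (hammingNorm_eq_zero.mp h0)
  · right
    rw [hammingNorm, card_eq_one] at h1
    obtain ⟨j, hj⟩ := h1
    have hmem : ∀ k : Fin n, s k ≠ 0 ↔ k = j := by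
      intro k
      constructor
      · intro hk
        have hk' : k ∈ ({i | s i ≠ 0} : Finset (Fin n)) := by simpa using hk
        rw [hj] at hk'; simpa using hk'
      · rintro rfl
        have hk' : k ∈ ({i | s i ≠ 0} : Finset (Fin n)) := by rw [hj]; simp
        simpa using hk'
    refine ⟨j, funext fun i => ?_⟩
    by_cases hij : i = j
    · subst hij
      rw [Pi.single_eq_same]
      exact zmod2_eq_one ((hmem i).mpr rfl)
    · have : s i = 0 := by by_contra hc; exact hij ((hmem i).mp hc)
      rw [Pi.single_eq_of_ne hij, this]

lemma card_ball0 (n : ℕ) :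
    ({s : Fin n → ZMod 2 | hammingNorm s ≤ 1} : Finset _).card = n + 1 := by
  have hset : ({s : Fin n → ZMod 2 | hammingNorm s ≤ 1} : Finset _)
      = insert 0 (Finset.image (fun j : Fin n => (Pi.single j 1 : Fin n → ZMod 2)) univ) := by
    ext s
    simp only [mem_filter, mem_univ, true_and, mem_insert, mem_image]
    constructor
    · intro hs
      rcases norm_le_one_iff s hs with h0 | ⟨j, rfl⟩
      · exact Or.inl h0
      · exact Or.inr ⟨j, rfl⟩
    · rintro (rfl | ⟨j, -, rfl⟩)
      · simp [hammingNorm_zero]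
      · rw [norm_single_one]
  rw [hset]
  rw [Finset.card_insert_of_notMem, Finset.card_image_of_injective, Finset.card_univ,
    Fintype.card_fin]
  · intro i j hij
    by_contra hc
    have h2 := congrFun hij i
    simp only [] at h2
    rw [Pi.single_eq_same, Pi.single_eq_of_ne hc] at h2
    revert h2; decide
  · simp only [mem_image, mem_univ, true_and, not_exists]
    intro j hj
    have h2 := congrFun hj j
    rw [Pi.single_eq_same, Pi.zero_apply] at h2
    revert h2; decide

lemma card_ball {n : ℕ} (x : Fin n → ZMod 2) :
    ({y : Fin n → ZMod 2 | hammingDist x y ≤ 1} : Finset _).card = n + 1 := by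
  have himg : ({y : Fin n → ZMod 2 | hammingDist x y ≤ 1} : Finset _)
      = Finset.image (fun s => x - s) {s : Fin n → ZMod 2 | hammingNorm s ≤ 1} := by
    ext y
    simp only [mem_filter, mem_univ, true_and, mem_image]
    constructor
    · intro hy
      exact ⟨x - y, by rwa [← neg_add_eq_sub, ← hammingDist_eq_hammingNorm, hammingDist_comm], by ring⟩
    · rintro ⟨s, hs, rfl⟩
      rwa [hammingDist_eq_hammingNorm, show -x + (x - s) = s from funext fun j => (show ∀ u w : ZMod 2, -u + (u - w) = w by decide) (x j) (s j)]
  rw [himg, Finset.card_image_of_injective _ sub_right_injective, card_ball0]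

lemma dist_sum {ι κ : Type*} [Fintype ι] [Fintype κ] [DecidableEq ι] [DecidableEq κ]
    (f g : ι ⊕ κ → ZMod 2) :
    hammingDist f g = hammingDist (f ∘ Sum.inl) (g ∘ Sum.inl)
      + hammingDist (f ∘ Sum.inr) (g ∘ Sum.inr) := by
  unfold hammingDist
  rw [Finset.card_filter, Finset.card_filter, Finset.card_filter, Fintype.sum_sum_type]
  rfl

lemma dist_reindex {ι κ : Type*} [Fintype ι] [Fintype κ] [DecidableEq ι] [DecidableEq κ]
    (e : ι ≃ κ) (f g : κ → ZMod 2) :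
    hammingDist (f ∘ e) (g ∘ e) = hammingDist f g := by
  unfold hammingDist
  exact Finset.card_equiv e (by simp)

/-- Sphere-covering (Hamming) bound. -/
lemma dom_lower {n : ℕ} (Δ : Finset (Fin n → ZMod 2)) (hΔ : IsDominating Δ) :
    2 ^ n ≤ Δ.card * (n + 1) := by
  have hcover : (univ : Finset (Fin n → ZMod 2))
      ⊆ Δ.biUnion (fun x => ({y | hammingDist x y ≤ 1} : Finset _)) := by
    intro y _
    obtain ⟨x, hxΔ, hxy⟩ := hΔ y
    exact Finset.mem_biUnion.mpr ⟨x, hxΔ, by simp [hxy]⟩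
  calc 2 ^ n = (univ : Finset (Fin n → ZMod 2)).card := by
        simp [Finset.card_univ, Fintype.card_fun]
    _ ≤ (Δ.biUnion (fun x => ({y | hammingDist x y ≤ 1} : Finset _))).card :=
        Finset.card_le_card hcover
    _ ≤ ∑ x ∈ Δ, ({y | hammingDist x y ≤ 1} : Finset _).card := Finset.card_biUnion_le
    _ = Δ.card * (n + 1) := by
        rw [Finset.sum_congr rfl fun x _ => card_ball x, Finset.sum_const, smul_eq_mul]

theorem stmt_2 (a : ℕ) (ha : 1 < a) :
    ∃ h : (Fin (2 ^ a - 1 - a) → ZMod 2) →ₗ[ZMod 2] (Fin a → ZMod 2),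
      (∀ y : (Fin (2 ^ a - 1 - a) → ZMod 2) × (Fin a → ZMod 2),
        ∃ x : Fin (2 ^ a - 1 - a) → ZMod 2,
          hammingDist x y.1 + hammingDist (h x) y.2 ≤ 1) ∧
      (Finset.image (fun x : Fin (2 ^ a - 1 - a) → ZMod 2 => (x, h x)) Finset.univ).card
        = 2 ^ (2 ^ a - 1 - a) ∧
      gamma (2 ^ a - 1) = 2 ^ (2 ^ a - 1 - a) := by
  set m := 2 ^ a - 1 - a with hm
  set n := 2 ^ a - 1 with hn
  have ha2 : a < 2 ^ a := Nat.lt_two_pow_self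
  have hmn : m + a = n := by omega
  -- the set of syndromes of weight ≥ 2
  set S : Finset (Fin a → ZMod 2) := {s | ¬ hammingNorm s ≤ 1} with hS
  have hScard : S.card = m := by
    have h1 := Finset.card_filter_add_card_filter_not
      (s := (univ : Finset (Fin a → ZMod 2))) (fun s => hammingNorm s ≤ 1)
    rw [card_ball0, Finset.card_univ] at h1
    simp only [Fintype.card_fun, Fintype.card_fin, ZMod.card] at h1
    rw [hS]
    omega
  -- choose a bijective enumeration of the syndromes
  let ee : S ≃ Fin m := S.equivFinOfCardEq hScard
  let v : Fin m → (Fin a → ZMod 2) := fun i => (ee.symm i : Fin a → ZMod 2)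
  let h : (Fin m → ZMod 2) →ₗ[ZMod 2] (Fin a → ZMod 2) :=
    (Pi.basisFun (ZMod 2) (Fin m)).constr (ZMod 2) v
  have hsingle : ∀ i : Fin m, h (Pi.single i 1) = v i := by
    intro i
    have := (Pi.basisFun (ZMod 2) (Fin m)).constr_basis (ZMod 2) v i
    rwa [Pi.basisFun_apply] at this
  -- domination in the product form
  have hdom : ∀ y : (Fin m → ZMod 2) × (Fin a → ZMod 2),
      ∃ x : Fin m → ZMod 2, hammingDist x y.1 + hammingDist (h x) y.2 ≤ 1 := by
    rintro ⟨y1, y2⟩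
    by_cases hcase : hammingNorm (h y1 - y2) ≤ 1
    · refine ⟨y1, ?_⟩
      rw [hammingDist_self, hammingDist_eq_hammingNorm]
      rw [zero_add, show -h y1 + y2 = h y1 - y2 from funext fun j => (show ∀ u w : ZMod 2, -u + w = u - w by decide) (h y1 j) (y2 j)]; exact hcase
    · have hsS : (h y1 - y2) ∈ S := by
        rw [hS]; simp only [Finset.mem_filter, Finset.mem_univ, true_and]; exact hcase
      set i : Fin m := ee ⟨h y1 - y2, hsS⟩ with hi
      refine ⟨y1 + Pi.single i 1, ?_⟩
      have hv : v i = h y1 - y2 := by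
        rw [hi]
        show ((ee.symm (ee ⟨h y1 - y2, hsS⟩)) : Fin a → ZMod 2) = _
        rw [Equiv.symm_apply_apply]
      have hdx : hammingDist (y1 + Pi.single i 1) y1 = 1 := by
        rw [hammingDist_eq_hammingNorm, show -(y1 + Pi.single i 1) + y1 = Pi.single i 1 by funext j; rw [Pi.add_apply, Pi.neg_apply, Pi.add_apply]; exact (show ∀ u w : ZMod 2, -(u + w) + u = w by decide) _ _, norm_single_one]
      have hdh : h (y1 + Pi.single i 1) = y2 := by
        rw [map_add, hsingle, hv]
        have : ∀ z : ZMod 2, z + z = 0 := by decide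
        funext j
        simp only [Pi.add_apply, Pi.sub_apply]
        have h2 : h y1 j + (h y1 j - y2 j) = y2 j := by
          have := this (h y1 j - y2 j)
          -- over ZMod 2, x - y = x + y hence x + (x - y) = y
          rcases (show ∀ u w : ZMod 2, u + (u - w) = w by decide) (h y1 j) (y2 j) with h3
          exact h3
        exact h2
      rw [hdx, hdh, hammingDist_self]
  -- the equivalence between the product and Q_n
  let e : Fin n ≃ (Fin m ⊕ Fin a) := (finCongr hmn.symm).trans finSumFinEquiv.symm
  let E : (Fin m → ZMod 2) × (Fin a → ZMod 2) → (Fin n → ZMod 2) :=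
    fun p => Sum.elim p.1 p.2 ∘ e
  have hEdist : ∀ p q, hammingDist (E p) (E q)
      = hammingDist p.1 q.1 + hammingDist p.2 q.2 := by
    rintro ⟨p1, p2⟩ ⟨q1, q2⟩
    show hammingDist (Sum.elim p1 p2 ∘ e) (Sum.elim q1 q2 ∘ e) = _
    rw [dist_reindex e, dist_sum]
    rfl
  have hEinj : Function.Injective E := by
    rintro ⟨p1, p2⟩ ⟨q1, q2⟩ hpq
    have h1 : Sum.elim p1 p2 = Sum.elim q1 q2 := by
      funext s
      have := congrFun hpq (e.symm s)
      simpa [E, Function.comp] using this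
    have hp1 : p1 = q1 := funext fun j => congrFun h1 (Sum.inl j)
    have hp2 : p2 = q2 := funext fun j => congrFun h1 (Sum.inr j)
    rw [hp1, hp2]
  have hEsurj : ∀ y : Fin n → ZMod 2, E (fun j => y (e.symm (Sum.inl j)),
      fun j => y (e.symm (Sum.inr j))) = y := by
    intro y
    funext i
    show Sum.elim _ _ (e i) = y i
    rcases hs : e i with s | s
    · simp only [Sum.elim_inl]
      rw [← hs, Equiv.symm_apply_apply]
    · simp only [Sum.elim_inr]
      rw [← hs, Equiv.symm_apply_apply]
  -- the dominating set in Q_n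
  set Γ : Finset ((Fin m → ZMod 2) × (Fin a → ZMod 2)) :=
    Finset.image (fun x : Fin m → ZMod 2 => (x, h x)) Finset.univ with hΓ
  have hgraphinj : Function.Injective (fun x : Fin m → ZMod 2 => (x, h x)) := by
    intro x y hxy
    exact congrArg Prod.fst hxy
  have hΓcard : Γ.card = 2 ^ m := by
    rw [hΓ, Finset.card_image_of_injective _ hgraphinj, Finset.card_univ]
    simp [Fintype.card_fun]
  set Δ : Finset (Fin n → ZMod 2) := Finset.image E Γ with hΔ
  have hΔcard : Δ.card = 2 ^ m := by
    rw [hΔ, Finset.card_image_of_injective _ hEinj, hΓcard]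
  have hΔdom : IsDominating Δ := by
    intro y
    obtain ⟨x, hx⟩ := hdom (fun j => y (e.symm (Sum.inl j)), fun j => y (e.symm (Sum.inr j)))
    refine ⟨E (x, h x), ?_, ?_⟩
    · rw [hΔ]
      exact Finset.mem_image_of_mem E (Finset.mem_image_of_mem _ (Finset.mem_univ x))
    · calc hammingDist (E (x, h x)) y
          = hammingDist (E (x, h x))
            (E (fun j => y (e.symm (Sum.inl j)), fun j => y (e.symm (Sum.inr j)))) := by
            rw [hEsurj y]
        _ ≤ 1 := by rw [hEdist]; exact hx
  -- gamma computation
  have hmem : (2 ^ m) ∈ {k | ∃ Δ : Finset (Fin n → ZMod 2), IsDominating Δ ∧ Δ.card = k} :=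
    ⟨Δ, hΔdom, hΔcard⟩
  have hupper : gamma n ≤ 2 ^ m := Nat.sInf_le hmem
  have hlower : 2 ^ m ≤ gamma n := by
    apply le_csInf ⟨2 ^ m, hmem⟩
    rintro k ⟨Δ', hΔ'dom, rfl⟩
    have hb := dom_lower Δ' hΔ'dom
    have hn1 : n + 1 = 2 ^ a := by omega
    rw [hn1] at hb
    have h2n : 2 ^ n = 2 ^ m * 2 ^ a := by rw [← pow_add, hmn]
    rw [h2n] at hb
    exact Nat.le_of_mul_le_mul_right hb (Nat.pos_of_ne_zero (by positivity))
  exact ⟨h, hdom, hΓcard, le_antisymm hupper hlower⟩
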